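/- Let S be an n×n unitary Hermitian complex matrix (n ≥ 2) such that every diagonal entry of S equals 2/n − 1 and every off-diagonal entry has modulus 2/n. Then there exist real numbers ξ₂,…,ξₙ such that S = D⁻¹(−I + (2/n)J)D, where D = diag(1, e^{iξ₂},…, e^{iξₙ}) and J is the n×n all-ones matrix. -/

import Mathlib

open Matrix Complex

lemma re_eq_abs_imp {z : ℂ} (h : z.re = ‖z‖) : z = (z.re : ℂ) := by
  have h1 := Complex.sq_norm z
  rw [Complex.normSq_apply] at h1
  rw [← h] at h1
  have h3 : z.im * z.im = 0 := by linear_combination -h1 + sq (z.re)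
  have him : z.im = 0 := mul_self_eq_zero.1 h3
  exact Complex.ext (by simp) (by simp [him])

/-- An n×n unitary Hermitian matrix with all diagonal entries 2/n−1 and all off-diagonal
entries of modulus 2/n is diagonally equivalent to −I + (2/n)J. -/
theorem stmt_4 (n : ℕ) (hn : 2 ≤ n) (S : Matrix (Fin n) (Fin n) ℂ)
    (hu : S * Sᴴ = 1) (hh : Sᴴ = S)
    (hdiag : ∀ j, S j j = 2 / n - 1)
    (hoff : ∀ j l, j ≠ l → ‖S j l‖ = 2 / n) :
    ∃ ξ : Fin n → ℝ, ξ ⟨0, by omega⟩ = 0 ∧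
      S = (Matrix.diagonal fun j => Complex.exp (Complex.I * ξ j))⁻¹
          * (-1 + (2 / n : ℂ) • Matrix.of (fun _ _ => (1 : ℂ)))
          * (Matrix.diagonal fun j => Complex.exp (Complex.I * ξ j)) := by
  have hnR : (0:ℝ) < (n:ℝ) := by positivity
  set z0 : Fin n := ⟨0, by omega⟩ with hz0def
  set c : ℝ := 2 / n with hc
  have hcpos : 0 < c := by positivity
  have hcC : (c : ℂ) = 2 / (n : ℂ) := by push_cast [hc]; ring
  have hcne : (c : ℂ) ≠ 0 := by exact_mod_cast hcpos.ne'
  have hS2 : S * S = 1 := by nth_rewrite 2 [← hh]; exact hu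
  have hstar : ∀ j l, S j l = (starRingEnd ℂ) (S l j) := by
    intro j l
    conv_lhs => rw [← hh]
    rfl
  set ξ : Fin n → ℝ := fun j => if j = z0 then 0 else (S z0 j).arg with hξ
  have hξ0 : ξ z0 = 0 := if_pos rfl
  have habsexp : ∀ x : ℝ, ‖Complex.exp (Complex.I * x)‖ = 1 := by
    intro x
    rw [Complex.norm_exp]
    simp [Complex.mul_re]
  have habsexp' : ∀ x : ℝ, ‖Complex.exp (-(Complex.I * x))‖ = 1 := by
    intro x
    rw [Complex.norm_exp]
    simp [Complex.mul_re]
  have hexpmul : ∀ x : ℝ, Complex.exp (Complex.I * x) * Complex.exp (-(Complex.I * x)) = 1 := by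
    intro x
    rw [← Complex.exp_add]
    simp
  -- Step A: first row
  have hA : ∀ l, l ≠ z0 → S z0 l = (c:ℂ) * Complex.exp (Complex.I * ξ l) := by
    intro l hl
    have hargl : ξ l = (S z0 l).arg := if_neg hl
    have habs : ((‖S z0 l‖ : ℝ) : ℂ) = (c:ℂ) := by
      exact_mod_cast congrArg (fun x : ℝ => (x:ℂ)) (hoff z0 l (Ne.symm hl))
    rw [hargl, mul_comm Complex.I, ← habs, Complex.norm_mul_exp_arg_mul_I]
  -- phase-adjusted entries
  set w : Fin n → Fin n → ℂ := fun k l =>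
    Complex.exp (Complex.I * ξ k) * S k l * Complex.exp (-(Complex.I * ξ l)) with hw
  have habsw : ∀ k l, k ≠ l → ‖w k l‖ = c := by
    intro k l hkl
    simp only [hw]
    rw [norm_mul, norm_mul, habsexp, habsexp', hoff k l hkl]
    ring
  have hSw : ∀ k l, S k l = Complex.exp (-(Complex.I * ξ k)) * w k l * Complex.exp (Complex.I * ξ l) := by
    intro k l
    simp only [hw]
    have h1 := hexpmul (ξ k)
    have h2 := hexpmul (ξ l)
    linear_combination (-(S k l)) * h1 - S k l * Complex.exp (Complex.I * (ξ k : ℝ)) * Complex.exp (-(Complex.I * (ξ k : ℝ))) * h2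
  -- Step B: key sum identity
  have key : ∀ l, l ≠ z0 → ∀ k, k ∈ (Finset.univ.erase z0).erase l → w k l = (c:ℂ) := by
    intro l hl
    set s : Finset (Fin n) := (Finset.univ.erase z0).erase l with hs
    have hmem1 : l ∈ Finset.univ.erase z0 := Finset.mem_erase.2 ⟨hl, Finset.mem_univ l⟩
    have h0 : ∑ k, S z0 k * S k l = 0 := by
      have := congrFun (congrFun hS2 z0) l
      rwa [Matrix.mul_apply, Matrix.one_apply_ne (Ne.symm hl)] at this
    have hsplit : ∑ k, S z0 k * S k l
        = S z0 z0 * S z0 l + (S z0 l * S l l + ∑ k ∈ s, S z0 k * S k l) := by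
      rw [← Finset.add_sum_erase _ _ (Finset.mem_univ z0)]
      congr 1
      rw [← Finset.add_sum_erase _ _ hmem1]
    have hterm : ∀ k ∈ s, S z0 k * S k l = (c:ℂ) * Complex.exp (Complex.I * ξ l) * w k l := by
      intro k hk
      have hk' := Finset.mem_erase.1 hk
      have hk0 : k ≠ z0 := (Finset.mem_erase.1 hk'.2).1
      rw [hA k hk0]
      simp only [hw]
      have h2 := hexpmul (ξ l)
      linear_combination (-((c:ℂ) * Complex.exp (Complex.I * (ξ k : ℝ)) * S k l)) * h2
    rw [Finset.sum_congr rfl hterm, ← Finset.mul_sum] at hsplit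
    have hdz : S z0 z0 = (c:ℂ) - 1 := by rw [hdiag, hcC]
    have hdl : S l l = (c:ℂ) - 1 := by rw [hdiag, hcC]
    rw [hsplit, hdz, hdl, hA l hl] at h0
    have hel : Complex.exp (Complex.I * (ξ l : ℝ)) ≠ 0 := Complex.exp_ne_zero _
    have hsum : ∑ k ∈ s, w k l = (2:ℂ) - 2 * c := by
      have hmul : ((c:ℂ) * Complex.exp (Complex.I * ξ l)) * (∑ k ∈ s, w k l)
          = ((c:ℂ) * Complex.exp (Complex.I * ξ l)) * ((2:ℂ) - 2 * c) := by
        linear_combination h0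
      exact mul_left_cancel₀ (mul_ne_zero hcne hel) hmul
    have hcard : s.card = n - 2 := by
      rw [hs, Finset.card_erase_of_mem hmem1, Finset.card_erase_of_mem (Finset.mem_univ _),
        Finset.card_univ, Fintype.card_fin]
      omega
    have hre : ∑ k ∈ s, (w k l).re = 2 - 2 * c := by
      have := congrArg Complex.re hsum
      rw [Complex.re_sum] at this
      simpa using this
    have hle : ∀ k ∈ s, (w k l).re ≤ c := by
      intro k hk
      have hkl : k ≠ l := (Finset.mem_erase.1 hk).1
      calc (w k l).re ≤ ‖w k l‖ := Complex.re_le_norm _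
        _ = c := habsw k l hkl
    have hzero : ∑ k ∈ s, (c - (w k l).re) = 0 := by
      rw [Finset.sum_sub_distrib, Finset.sum_const, hre, hcard, nsmul_eq_mul]
      have h2n : ((n - 2 : ℕ) : ℝ) = (n : ℝ) - 2 := by
        push_cast [Nat.cast_sub hn]; ring
      rw [h2n, hc]
      field_simp
      ring
    have heach := (Finset.sum_eq_zero_iff_of_nonneg
      (fun k hk => by linarith [hle k hk])).1 hzero
    intro k hk
    have hrek : (w k l).re = c := by have := heach k hk; linarith
    have hkl : k ≠ l := (Finset.mem_erase.1 hk).1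
    have := re_eq_abs_imp (z := w k l) (by rw [hrek, habsw k l hkl])
    rw [this, hrek]
  -- Full description of S
  have hS' : ∀ j l, S j l = Complex.exp (-(Complex.I * ξ j)) *
      ((if j = l then (-1:ℂ) else 0) + (c:ℂ)) * Complex.exp (Complex.I * ξ l) := by
    intro j l
    by_cases hjl : j = l
    · subst hjl
      rw [if_pos rfl, hdiag, hcC]
      have h1 := hexpmul (ξ j)
      linear_combination (1 - 2/(n:ℂ)) * h1
    · simp only [if_neg hjl, zero_add]
      by_cases hj0 : j = z0
      · subst hj0
        rw [hA l (fun h => hjl h.symm), hξ0]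
        norm_num
      · by_cases hl0 : l = z0
        · subst hl0
          rw [hstar j z0, hA j hj0, hξ0, _root_.map_mul, ← Complex.exp_conj]
          have hconj : (starRingEnd ℂ) (Complex.I * (ξ j : ℝ)) = -(Complex.I * (ξ j : ℝ)) := by
            simp [Complex.conj_ofReal]
          rw [hconj, Complex.conj_ofReal]
          norm_num
          ring
        · have hk : j ∈ (Finset.univ.erase z0).erase l :=
            Finset.mem_erase.2 ⟨hjl, Finset.mem_erase.2 ⟨hj0, Finset.mem_univ _⟩⟩
          have hwjl := key l hl0 j hk
          rw [hSw j l, hwjl]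
  refine ⟨ξ, hξ0, ?_⟩
  have hDinv : (Matrix.diagonal fun j => Complex.exp (Complex.I * ξ j))⁻¹
      = Matrix.diagonal fun j => Complex.exp (-(Complex.I * ξ j)) := by
    apply Matrix.inv_eq_right_inv
    rw [Matrix.diagonal_mul_diagonal]
    convert Matrix.diagonal_one with j
    exact hexpmul (ξ j)
  rw [hDinv]
  ext j l
  rw [Matrix.mul_diagonal, Matrix.diagonal_mul, hS' j l, hcC]
  simp only [Matrix.add_apply, Matrix.neg_apply, Matrix.one_apply, Matrix.smul_apply,
    Matrix.of_apply, smul_eq_mul, mul_one]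
  split_ifs <;> ring
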